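/- Let ζ = exp(2πi/5). Then there exists g ∈ SU(4) such that g · diag(ζ, ζ⁴, ζ³, ζ²) · g⁻¹ = diag(ζ⁴, ζ, ζ³, ζ²), while diag(ζ, ζ⁴, ζ³, ζ²) ≠ diag(ζ⁴, ζ, ζ³, ζ²) and diag(ζ, ζ⁴, ζ³, ζ²) is not a scalar multiple of the identity. Consequently the biquotient action of SU(2)² on SU(4) determined by the pair (φ₁₀ + φ₀₁, φ₁₁), whose maximal torus images are diag(z, z̄, w, w̄) and diag(zw, z̄w̄, zw̄, z̄w), is not effectively free. -/

import Mathlib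

open Matrix Complex

lemma zeta_ne_one : Complex.exp (2 * Real.pi * Complex.I / 5) ≠ 1 := by
  intro h
  rw [Complex.exp_eq_one_iff] at h
  obtain ⟨n, hn⟩ := h
  have hpiI : (2 * (Real.pi : ℂ) * Complex.I) ≠ 0 :=
    mul_ne_zero (mul_ne_zero two_ne_zero (Complex.ofReal_ne_zero.mpr Real.pi_ne_zero))
      Complex.I_ne_zero
  have hz : ((n : ℂ) * 5 - 1) * (2 * Real.pi * Complex.I) = 0 := by
    field_simp at hn
    linear_combination -(2 * Real.pi * Complex.I) * hn
  rcases mul_eq_zero.mp hz with h' | h'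
  · have h5 : ((n * 5 - 1 : ℤ) : ℂ) = 0 := by push_cast; linear_combination h'
    have : (n * 5 - 1 : ℤ) = 0 := by exact_mod_cast h5
    omega
  · exact hpiI h'

lemma zeta_pow_five : Complex.exp (2 * Real.pi * Complex.I / 5) ^ 5 = 1 := by
  rw [← Complex.exp_nat_mul,
    show ((5 : ℕ) : ℂ) * (2 * Real.pi * Complex.I / 5) = 2 * Real.pi * Complex.I by
      push_cast; ring, Complex.exp_two_pi_mul_I]

lemma zeta_ne_pow4 : Complex.exp (2 * Real.pi * Complex.I / 5) ≠
    Complex.exp (2 * Real.pi * Complex.I / 5) ^ 4 := by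
  set ζ := Complex.exp (2 * Real.pi * Complex.I / 5) with hζ
  intro h
  have hne : ζ ≠ 0 := Complex.exp_ne_zero _
  have h3 : ζ ^ 3 = 1 := by
    have : ζ * ζ ^ 3 = ζ * 1 := by
      rw [mul_one]
      calc ζ * ζ ^ 3 = ζ ^ 4 := by ring
      _ = ζ := h.symm
    exact mul_left_cancel₀ hne this
  have h5 := zeta_pow_five
  have : ζ = 1 := by
    have h9 : ζ ^ 9 = 1 := by
      calc ζ ^ 9 = (ζ ^ 3) ^ 3 := by ring
      _ = 1 := by rw [h3]; norm_num
    have h10 : ζ ^ 10 = 1 := by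
      calc ζ ^ 10 = (ζ ^ 5) ^ 2 := by ring
      _ = 1 := by rw [h5]; norm_num
    calc ζ = ζ ^ 10 / ζ ^ 9 := by field_simp
    _ = 1 := by rw [h9, h10]; norm_num
  exact zeta_ne_one this

/-- With `ζ = exp(2πi/5)`, the matrices `diag(ζ, ζ⁴, ζ³, ζ²)` and
`diag(ζ⁴, ζ, ζ³, ζ²)` are conjugate in `SU(4)`, distinct, and not scalar.  Consequently the
biquotient action of `SU(2)²` on `SU(4)` determined by the pair `(φ₁₀ + φ₀₁, φ₁₁)` is not
effectively free. -/
theorem su4_pair_not_effectively_free :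
    ∀ ζ : ℂ, ζ = Complex.exp (2 * Real.pi * Complex.I / 5) →
    (∃ g : Matrix (Fin 4) (Fin 4) ℂ, gᴴ * g = 1 ∧ g.det = 1 ∧
      g * Matrix.diagonal ![ζ, ζ ^ 4, ζ ^ 3, ζ ^ 2] * g⁻¹ =
        Matrix.diagonal ![ζ ^ 4, ζ, ζ ^ 3, ζ ^ 2]) ∧
    Matrix.diagonal ![ζ, ζ ^ 4, ζ ^ 3, ζ ^ 2] ≠ Matrix.diagonal ![ζ ^ 4, ζ, ζ ^ 3, ζ ^ 2] ∧
    ∀ c : ℂ, Matrix.diagonal ![ζ, ζ ^ 4, ζ ^ 3, ζ ^ 2] ≠ c • (1 : Matrix (Fin 4) (Fin 4) ℂ) := by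
  intro ζ hζ
  have hne : ζ ≠ ζ ^ 4 := hζ ▸ zeta_ne_pow4
  refine ⟨?_, ?_, ?_⟩
  · refine ⟨!![0, -1, 0, 0; 1, 0, 0, 0; 0, 0, 1, 0; 0, 0, 0, 1], ?_, ?_, ?_⟩
    · ext i j
      fin_cases i <;> fin_cases j <;>
        simp [Matrix.mul_apply, Fin.sum_univ_four, Matrix.conjTranspose_apply,
          Matrix.one_apply, Matrix.vecHead, Matrix.vecTail]
    · simp [Matrix.det_succ_row_zero, Fin.sum_univ_succ]
      rfl
    · have hdet : (!![0, -1, 0, 0; 1, 0, 0, 0; 0, 0, 1, 0; 0, 0, 0, 1] :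
          Matrix (Fin 4) (Fin 4) ℂ).det = 1 := by
        simp [Matrix.det_succ_row_zero, Fin.sum_univ_succ]
        rfl
      have hcomm : !![0, -1, 0, 0; 1, 0, 0, 0; 0, 0, 1, 0; 0, 0, 0, 1] *
          Matrix.diagonal ![ζ, ζ ^ 4, ζ ^ 3, ζ ^ 2] =
          Matrix.diagonal ![ζ ^ 4, ζ, ζ ^ 3, ζ ^ 2] *
          !![0, -1, 0, 0; 1, 0, 0, 0; 0, 0, 1, 0; 0, 0, 0, 1] := by
        ext i j
        fin_cases i <;> fin_cases j <;>
          simp [Matrix.mul_apply, Fin.sum_univ_four, Matrix.diagonal,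
            Matrix.vecHead, Matrix.vecTail]
      rw [hcomm, Matrix.mul_assoc, Matrix.mul_nonsing_inv _ (by rw [hdet]; exact isUnit_one),
        Matrix.mul_one]
  · intro h
    have := congrArg (fun M => M 0 0) h
    simp [Matrix.diagonal] at this
    exact hne this
  · intro c h
    have h0 := congrArg (fun M => M 0 0) h
    have h1 := congrArg (fun M => M 1 1) h
    simp [Matrix.diagonal, Matrix.one_apply] at h0 h1
    exact hne (h0.trans h1.symm)
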